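/- For 1/2 < p < 1, let b_p = D_KL(q* || p) where t* = D_KL(1/2 || p)/log(p/(1-p)), p* = (1+t*)/2, q* = 1-p*, and let a_p = D_KL(1/2 || p). Then 3/2 · a_p ≤ b_p ≤ 25/16 · a_p. -/

import Mathlib

/-- Bernoulli Kullback-Leibler divergence `D_KL(x || p)`. -/
noncomputable def klBer (x p : ℝ) : ℝ :=
  x * Real.log (x / p) + (1 - x) * Real.log ((1 - x) / (1 - p))

open Real

lemma exp_lb (y : ℝ) (hy : 0 ≤ y) : 1 + y + y^2/2 + y^3/6 ≤ Real.exp y := by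
  have h := Real.sum_le_exp_of_nonneg hy 4
  have e : ∑ i ∈ Finset.range 4, y ^ i / i.factorial = 1 + y + y^2/2 + y^3/6 := by
    simp [Finset.sum_range_succ, Nat.factorial]
  linarith [e ▸ h]

lemma exp_ub (y : ℝ) (h0 : 0 ≤ y) (h1 : y ≤ 1) :
    Real.exp y ≤ 1 + y + y^2/2 + y^3/6 + 5*y^4/96 := by
  have h := Real.exp_bound' h0 h1 (n := 4) (by norm_num)
  have e : (∑ i ∈ Finset.range 4, y ^ i / i.factorial) + y ^ 4 * (4+1) / (Nat.factorial 4 * 4)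
      = 1 + y + y^2/2 + y^3/6 + 5*y^4/96 := by
    simp [Finset.sum_range_succ, Nat.factorial]
    ring
  linarith [e ▸ h]

lemma log_ub_plus {t : ℝ} (h0 : 0 ≤ t) (h1 : t ≤ 1/2) :
    Real.log (1 + t) ≤ t - t^2/2 + t^3/3 := by
  have hy0 : 0 ≤ t - t^2/2 + t^3/3 := by nlinarith [sq_nonneg t, pow_nonneg h0 3]
  have h2 : 1 + t ≤ Real.exp (t - t^2/2 + t^3/3) := by
    have h := exp_lb _ hy0
    nlinarith [pow_nonneg h0 4, pow_nonneg h0 5, pow_nonneg h0 6, pow_nonneg h0 7,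
      pow_nonneg h0 8, pow_nonneg h0 9]
  calc Real.log (1+t) ≤ Real.log (Real.exp (t - t^2/2 + t^3/3)) :=
        Real.log_le_log (by linarith) h2
    _ = _ := Real.log_exp _

lemma log_ub_minus {t : ℝ} (h0 : 0 ≤ t) (h1 : t ≤ 1/2) :
    Real.log (1 - t) ≤ -(t + t^2/2 + t^3/3) := by
  have hz0 : 0 ≤ t + t^2/2 + t^3/3 := by positivity
  have hz1 : t + t^2/2 + t^3/3 ≤ 1 := by nlinarith
  have hU := exp_ub _ hz0 hz1
  have key : (1 - t) * Real.exp (t + t^2/2 + t^3/3) ≤ 1 := by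
    have hQ : (1 - t) * (1 + (t + t^2/2 + t^3/3) + (t + t^2/2 + t^3/3)^2/2
        + (t + t^2/2 + t^3/3)^3/6 + 5*(t + t^2/2 + t^3/3)^4/96) ≤ 1 := by
      nlinarith [pow_nonneg h0 4, pow_nonneg h0 5, pow_nonneg h0 6, pow_nonneg h0 7,
        pow_nonneg h0 8, pow_nonneg h0 9, pow_nonneg h0 10, pow_nonneg h0 11,
        pow_nonneg h0 12, pow_nonneg h0 13]
    nlinarith [Real.exp_pos (t + t^2/2 + t^3/3)]
  have h1t : (0:ℝ) < 1 - t := by linarith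
  have h3 : 1 - t ≤ Real.exp (-(t + t^2/2 + t^3/3)) := by
    rw [Real.exp_neg, ← one_div]
    exact (le_div_iff₀ (Real.exp_pos _)).mpr (by linarith)
  calc Real.log (1-t) ≤ Real.log (Real.exp (-(t + t^2/2 + t^3/3))) :=
        Real.log_le_log h1t h3
    _ = _ := Real.log_exp _

lemma g_ub {t : ℝ} (h0 : 0 ≤ t) (h1 : t ≤ 1/2) :
    (1+t) * Real.log (1+t) + (1-t) * Real.log (1-t) ≤ t^2 + 2/3*t^4 := by
  have hp := log_ub_plus h0 h1
  have hm := log_ub_minus h0 h1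
  nlinarith [mul_le_mul_of_nonneg_left hp (by linarith : (0:ℝ) ≤ 1 + t),
    mul_le_mul_of_nonneg_left hm (by linarith : (0:ℝ) ≤ 1 - t)]

lemma g_lb {t : ℝ} (h0 : 0 ≤ t) (h1 : t < 1) :
    0 ≤ (1+t) * Real.log (1+t) + (1-t) * Real.log (1-t) := by
  have hp : Real.log (1 / (1+t)) ≤ 1/(1+t) - 1 := Real.log_le_sub_one_of_pos (by positivity)
  have hm : Real.log (1 / (1-t)) ≤ 1/(1-t) - 1 :=
    Real.log_le_sub_one_of_pos (by simp; linarith)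
  rw [one_div, Real.log_inv] at hp hm
  have h1t : (0:ℝ) < 1 - t := by linarith
  have h2t : (0:ℝ) < 1 + t := by linarith
  have hp' : t ≤ (1+t) * Real.log (1+t) := by
    have := mul_le_mul_of_nonneg_left hp h2t.le
    rw [mul_sub, mul_inv_cancel₀ h2t.ne'] at this
    linarith
  have hm' : -t ≤ (1-t) * Real.log (1-t) := by
    have := mul_le_mul_of_nonneg_left hm h1t.le
    rw [mul_sub, mul_inv_cancel₀ h1t.ne'] at this
    linarith
  linarith

lemma tanh_ge_half {x : ℝ} (h0 : 0 ≤ x) (h1 : x ≤ 6/5) :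
    x * Real.cosh x ≤ 2 * Real.sinh x := by
  rw [Real.cosh_eq, Real.sinh_eq]
  have hE : 0 < Real.exp x := Real.exp_pos x
  have h2x : 1 + 2*x + (2*x)^2/2 + (2*x)^3/6 ≤ Real.exp (2*x) := exp_lb _ (by linarith)
  have hsq : Real.exp (2*x) = Real.exp x * Real.exp x := by
    rw [← Real.exp_add]; ring_nf
  rw [hsq] at h2x
  have key : 2 + x ≤ (2 - x) * (Real.exp x * Real.exp x) := by
    have hmul := mul_le_mul_of_nonneg_left h2x (by linarith : (0:ℝ) ≤ 2 - x)
    nlinarith [pow_nonneg h0 3, pow_nonneg h0 4, sq_nonneg x]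
  have he : 2*((Real.exp x - Real.exp (-x))/2) - x*((Real.exp x + Real.exp (-x))/2)
      = ((2-x)*(Real.exp x * Real.exp x) - (2+x)) * (Real.exp x)⁻¹ / 2 := by
    rw [Real.exp_neg]
    field_simp
    ring
  nlinarith [mul_nonneg (mul_nonneg (by linarith : (0:ℝ) ≤ (2-x)*(Real.exp x * Real.exp x) - (2+x)) (inv_nonneg.mpr hE.le)) (by norm_num : (0:ℝ) ≤ (2:ℝ)⁻¹)]

lemma sinh_le_poly_cosh {x : ℝ} (h0 : 0 ≤ x) (h1 : x ≤ 6/5) :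
    Real.sinh x ≤ (x - x^3/12) * Real.cosh x := by
  set f : ℝ → ℝ := fun x => (x - x^3/12) * Real.cosh x - Real.sinh x with hf
  have hd : ∀ y : ℝ, HasDerivAt f
      ((1 - 3*y^2/12) * Real.cosh y + (y - y^3/12) * Real.sinh y - Real.cosh y) y := by
    intro y
    have h1 : HasDerivAt (fun x : ℝ => x - x^3/12) (1 - 3*y^2/12) y := by
      simpa using (hasDerivAt_id y).fun_sub ((hasDerivAt_pow 3 y).div_const 12)
    exact (h1.mul (Real.hasDerivAt_cosh y)).sub (Real.hasDerivAt_sinh y)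
  have hmono : MonotoneOn f (Set.Icc 0 (6/5)) := by
    apply monotoneOn_of_hasDerivWithinAt_nonneg (convex_Icc _ _)
      (fun y _ => ((hd y).continuousAt.continuousWithinAt))
      (fun y hy => ((hd y).hasDerivWithinAt))
    intro y hy
    rw [interior_Icc] at hy
    obtain ⟨hy0, hy1⟩ := hy
    have hth := tanh_ge_half hy0.le hy1.le
    have hc : 0 < Real.cosh y := Real.cosh_pos y
    have hs : 0 ≤ Real.sinh y := by
      have : Real.sinh 0 ≤ Real.sinh y := Real.sinh_le_sinh.mpr hy0.le
      simpa using this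
    -- (1 - y²/4 - 1)cosh + (y - y³/12) sinh ≥ -y²/4 cosh + (y - y³/12)(y/2) cosh ≥ 0
    have h6 : y^2 ≤ 36/25 := by nlinarith
    have hy3 : 0 ≤ y - y^3/12 := by nlinarith [mul_le_mul_of_nonneg_left h6 hy0.le]
    have hth' := mul_le_mul_of_nonneg_left hth hy3
    have key2 : 0 ≤ Real.cosh y * (y^2/4 - y^4/24) := by
      apply mul_nonneg hc.le
      nlinarith [sq_nonneg y]
    nlinarith [hth', key2]
  have := hmono (Set.mem_Icc.mpr ⟨le_refl 0, by norm_num⟩) (Set.mem_Icc.mpr ⟨h0, h1⟩) h0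
  simp [hf] at this
  linarith [this]

lemma sinh_le_poly_cosh' {x : ℝ} (h0 : 0 ≤ x) (h1 : x ≤ 7/3) :
    Real.sinh x ≤ (x - x^3/12) * Real.cosh x := by
  rcases le_or_gt x (6/5) with h | h
  · exact sinh_le_poly_cosh h0 h
  · have hc : 0 < Real.cosh x := Real.cosh_pos x
    have h12 : 1 ≤ x - x^3/12 := by nlinarith [sq_nonneg (x - 7/3), sq_nonneg (x - 6/5)]
    calc Real.sinh x ≤ Real.cosh x := (Real.sinh_lt_cosh x).le
      _ ≤ (x - x^3/12) * Real.cosh x := by nlinarith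

lemma log_cosh_ub {x : ℝ} (h0 : 0 ≤ x) (h1 : x ≤ 7/3) :
    Real.log (Real.cosh x) ≤ x^2/2 - x^4/48 := by
  set f : ℝ → ℝ := fun x => x^2/2 - x^4/48 - Real.log (Real.cosh x) with hf
  have hd : ∀ y : ℝ, HasDerivAt f (y - 4*y^3/48 - Real.sinh y / Real.cosh y) y := by
    intro y
    have h1 : HasDerivAt (fun x : ℝ => x^2/2 - x^4/48) (2*y/2 - 4*y^3/48) y := by
      exact ((hasDerivAt_pow 2 y).div_const 2).sub ((hasDerivAt_pow 4 y).div_const 48) |>.congr_deriv (by push_cast; ring)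
    have h2 : HasDerivAt (fun x : ℝ => Real.log (Real.cosh x)) (Real.sinh y / Real.cosh y) y :=
      (Real.hasDerivAt_cosh y).log (Real.cosh_pos y).ne'
    simpa using (h1.fun_sub h2).congr_deriv (by ring)
  have hmono : MonotoneOn f (Set.Icc 0 (7/3)) := by
    apply monotoneOn_of_hasDerivWithinAt_nonneg (convex_Icc _ _)
      (fun y _ => ((hd y).continuousAt.continuousWithinAt))
      (fun y hy => ((hd y).hasDerivWithinAt))
    intro y hy
    rw [interior_Icc] at hy
    obtain ⟨hy0, hy1⟩ := hy
    have hc : 0 < Real.cosh y := Real.cosh_pos y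
    have hkey := sinh_le_poly_cosh' hy0.le hy1.le
    rw [sub_nonneg, div_le_iff₀ hc]
    nlinarith [hkey]
  have := hmono (Set.mem_Icc.mpr ⟨le_refl 0, by norm_num⟩) (Set.mem_Icc.mpr ⟨h0, h1⟩) h0
  simp [hf] at this
  linarith [this]

lemma log_cosh_le_self {x : ℝ} (h0 : 0 ≤ x) : Real.log (Real.cosh x) ≤ x := by
  have h : Real.cosh x ≤ Real.exp x := by
    rw [Real.cosh_eq]
    have : Real.exp (-x) ≤ Real.exp x := Real.exp_le_exp.mpr (by linarith)
    linarith
  calc Real.log (Real.cosh x) ≤ Real.log (Real.exp x) :=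
        Real.log_le_log (Real.cosh_pos x) h
    _ = x := Real.log_exp x

lemma log_cosh_nonneg (x : ℝ) : 0 ≤ Real.log (Real.cosh x) := by
  have := Real.one_le_cosh x
  simpa using Real.log_le_log (by norm_num) this

lemma key_ineq {x : ℝ} (h0 : 0 < x) :
    2 * x^2 * Real.log (Real.cosh x) + (Real.log (Real.cosh x))^3 / 3 ≤ x^4 := by
  set a := Real.log (Real.cosh x) with ha
  have ha0 : 0 ≤ a := log_cosh_nonneg x
  rcases le_or_gt x (7/3) with h | h
  · have hM := log_cosh_ub h0.le h
    have hM0 : 0 ≤ x^2/2 - x^4/48 := le_trans ha0 hM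
    have ha3 : a^3 ≤ (x^2/2 - x^4/48)^3 := by
      exact pow_le_pow_left₀ ha0 hM 3
    have hid : x^4 - (2*x^2*(x^2/2 - x^4/48) + (x^2/2 - x^4/48)^3/3)
        = x^8 * ((x^2 - 36)^2 + 432) / 331776 := by ring
    nlinarith [mul_nonneg (pow_nonneg (sq_nonneg x) 2) (add_nonneg (sq_nonneg (x^2-36)) (by norm_num : (0:ℝ) ≤ 432)), sq_nonneg x, mul_le_mul_of_nonneg_left hM (by positivity : (0:ℝ) ≤ 2*x^2)]
  · have hx := log_cosh_le_self h0.le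
    have ha3 : a^3 ≤ x^3 := pow_le_pow_left₀ ha0 hx 3
    have h2 : 2*x^2*a ≤ 2*x^3 := by nlinarith [sq_nonneg x]
    nlinarith [pow_pos h0 3]

theorem stmt5 (p a b ts ps qs : ℝ) (hp : 1/2 < p) (hp1 : p < 1)
    (ha : a = klBer (1/2) p)
    (hts : ts = a / Real.log (p / (1 - p)))
    (hps : ps = (1 + ts)/2) (hqs : qs = 1 - ps)
    (hb : b = klBer qs p) :
    3/2 * a ≤ b ∧ b ≤ 25/16 * a := by
  have hp0 : (0:ℝ) < p := by linarith
  have hq0 : (0:ℝ) < 1 - p := by linarith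
  obtain ⟨L, hL⟩ : ∃ L : ℝ, L = Real.log p - Real.log (1 - p) := ⟨_, rfl⟩
  have hLpos : 0 < L := hL ▸ sub_pos.mpr (Real.log_lt_log hq0 (by linarith))
  have hlogdiv : Real.log (p / (1 - p)) = L := hL ▸ Real.log_div hp0.ne' hq0.ne'
  -- a in explicit form
  have e1 : Real.log ((1/2)/p) = -Real.log 2 - Real.log p := by
    rw [Real.log_div (by norm_num) hp0.ne', show (1:ℝ)/2 = 2⁻¹ by norm_num, Real.log_inv]
  have e2 : Real.log ((1 - 1/2)/(1 - p)) = -Real.log 2 - Real.log (1 - p) := by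
    rw [Real.log_div (by norm_num) hq0.ne', show (1:ℝ) - 1/2 = 2⁻¹ by norm_num, Real.log_inv]
  have ha' : a = -Real.log 2 - (Real.log p + Real.log (1 - p))/2 := by
    rw [ha, klBer, e1, e2]; ring
  -- positivity of a
  have hlog4 : Real.log 4 = 2 * Real.log 2 := by
    rw [show (4:ℝ) = 2^2 by norm_num, Real.log_pow]; push_cast; ring
  have ha0 : 0 < a := by
    have hpq4 : p * (1 - p) < 1/4 := by nlinarith [sq_nonneg (2*p - 1)]
    have := Real.log_lt_log (mul_pos hp0 hq0) hpq4
    rw [Real.log_mul hp0.ne' hq0.ne', show (1:ℝ)/4 = 4⁻¹ by norm_num, Real.log_inv, hlog4] at this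
    linarith
  -- 2a < L
  have h2aL : 2 * a < L := by
    have : Real.log (1/2) < Real.log p := Real.log_lt_log (by norm_num) hp
    rw [show (1:ℝ)/2 = 2⁻¹ by norm_num, Real.log_inv] at this
    rw [ha', hL]; linarith
  have hts_eq : ts = a / L := by rw [hts, hlogdiv]
  have hts0 : 0 < ts := hts_eq ▸ div_pos ha0 hLpos
  have htsv : ts * L = a := by rw [hts_eq, div_mul_cancel₀ _ hLpos.ne']
  have hts12 : ts < 1/2 := by
    rw [hts_eq, div_lt_iff₀ hLpos]; linarith
  -- expression for b
  have hqs' : qs = (1 - ts)/2 := by rw [hqs, hps]; ring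
  have hqs0 : 0 < qs := by rw [hqs']; linarith
  have h1qs : 1 - qs = (1 + ts)/2 := by rw [hqs']; ring
  have h1ts : (0:ℝ) < 1 - ts := by linarith
  have h1ts' : (0:ℝ) < 1 + ts := by linarith
  have e3 : Real.log (qs/p) = Real.log (1 - ts) - Real.log 2 - Real.log p := by
    rw [Real.log_div (by positivity) hp0.ne', hqs',
      Real.log_div h1ts.ne' (by norm_num : (2:ℝ) ≠ 0)]
  have e4 : Real.log ((1 - qs)/(1 - p)) = Real.log (1 + ts) - Real.log 2 - Real.log (1 - p) := by
    rw [Real.log_div (by rw [h1qs]; positivity) hq0.ne', h1qs,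
      Real.log_div h1ts'.ne' (by norm_num : (2:ℝ) ≠ 0)]
  have hb2 : b = (1 - ts)/2 * (Real.log (1 - ts) - Real.log 2 - Real.log p)
      + (1 + ts)/2 * (Real.log (1 + ts) - Real.log 2 - Real.log (1 - p)) := by
    rw [hb, klBer, e3, e4, h1qs, hqs']
  have hb' : b = 3/2 * a +
      ((1+ts) * Real.log (1+ts) + (1-ts) * Real.log (1-ts))/2 := by
    have htsv' : ts * (Real.log p - Real.log (1 - p)) = a := by rw [← hL]; exact htsv
    linear_combination hb2 + (1/2) * htsv' - ha'
  constructor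
  · have := g_lb hts0.le (by linarith)
    linarith [hb'.ge]
  · -- upper bound
    have hG := g_ub hts0.le hts12.le
    -- cosh(L/2) identity
    have hE : 0 < Real.exp (L/2) := Real.exp_pos _
    have hE2 : Real.exp (L/2) * Real.exp (L/2) = p / (1 - p) := by
      rw [← Real.exp_add, show L/2 + L/2 = L by ring, hL, Real.exp_sub,
        Real.exp_log hp0, Real.exp_log hq0]
    have hE2' : Real.exp (L/2) * Real.exp (L/2) * (1 - p) = p := by
      rw [hE2]; field_simp
    have hEinv : (Real.exp (L/2))⁻¹ * Real.exp (L/2) = 1 := inv_mul_cancel₀ hE.ne'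
    have hc1 : Real.cosh (L/2) * ((1 - p) * (2 * Real.exp (L/2))) = 1 := by
      rw [Real.cosh_eq, Real.exp_neg]
      linear_combination hE2' + (1 - p) * hEinv
    have hc : Real.cosh (L/2) = ((1 - p) * (2 * Real.exp (L/2)))⁻¹ :=
      eq_inv_of_mul_eq_one_left (by linear_combination hc1)
    have hacosh : Real.log (Real.cosh (L/2)) = a := by
      rw [hc, Real.log_inv, Real.log_mul (by positivity) (by positivity),
        Real.log_mul (by norm_num) hE.ne', Real.log_exp, ha', hL]
      ring
    have hkey := key_ineq (x := L/2) (by positivity)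
    rw [hacosh] at hkey
    have hkey16 : 8*a*L^2 + 16/3*a^3 ≤ L^4 := by linarith [hkey]
    have h8 : 8*ts + 16/3*ts^3 ≤ L := by
      have heq : 8*ts + 16/3*ts^3 = (8*a*L^2 + 16/3*a^3)/L^3 := by
        rw [hts_eq]; field_simp
      rw [heq, div_le_iff₀ (by positivity)]
      linarith [hkey16]
    have hGa : 8*ts^2 + 16/3*ts^4 ≤ a := by
      linarith [mul_le_mul_of_nonneg_left h8 hts0.le, htsv]
    linarith [hb', hG, hGa]
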